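/- Stationarity of the Gibbs state: Let σ be an invertible density matrix (in particular, the Gibbs state σ = e^{−βH}/tr(e^{−βH}) of an n-qubit Hamiltonian). For any Hermitian matrix P, define the Lindbladian L^P(ρ) = −i[G^P, ρ] + A^P ρ (A^P)† − ½{(A^P)† A^P, ρ} with jump operator A^P = σ^{1/4} P σ^{−1/4} and coherent term defined in the eigenbasis of σ (eigenvalues σ_i) by G^P_{ij} = −i·((σ_i^{1/2} − σ_j^{1/2})/(2·σ_i^{1/4}·σ_j^{1/4}·(σ_i^{1/2} + σ_j^{1/2})))·Σ_k σ_k^{1/2} P_{ik} P_{kj}. Then L^P(σ) = 0; consequently the balanced Lindbladian L* = Σ_{j=1}^n Σ_{P∈P_j} L^P satisfies L*(σ) = 0. -/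

import Mathlib

open scoped BigOperators
open Classical
open scoped ComplexOrder

noncomputable section

/-- Index type for the standard basis of the `n`-qubit Hilbert space `(ℂ²)^{⊗n}`. -/
abbrev QIdx (n : ℕ) := Fin n → Fin 2

/-- Operators (matrices) on the `n`-qubit Hilbert space `(ℂ²)^{⊗n}`. -/
abbrev QMat (n : ℕ) := Matrix (QIdx n) (QIdx n) ℂ

/-- The trace norm (Schatten 1-norm) of a matrix: `‖A‖₁ = tr √(AᴴA)`. -/
noncomputable def traceNorm {I : Type} [Fintype I] [DecidableEq I] (A : Matrix I I ℂ) : ℝ :=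
  (((Matrix.posSemidef_conjTranspose_mul_self A).1.eigenvectorUnitary : Matrix I I ℂ) *
    Matrix.diagonal (((↑) : ℝ → ℂ) ∘ Real.sqrt ∘ (Matrix.posSemidef_conjTranspose_mul_self A).1.eigenvalues) *
    (star (Matrix.posSemidef_conjTranspose_mul_self A).1.eigenvectorUnitary : Matrix I I ℂ)).trace.re

/-- The operator norm (spectral norm) of a complex matrix. -/
noncomputable def opNorm {I : Type} [Fintype I] [DecidableEq I] (A : Matrix I I ℂ) : ℝ :=
  ‖Matrix.toEuclideanCLM (𝕜 := ℂ) A‖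

/-- The partial trace of an `n`-qubit operator over the qubit at site `i`, as an operator
on the remaining qubits. -/
noncomputable def ptraceSite {n : ℕ} (i : Fin n) (X : QMat n) :
    Matrix ({j : Fin n // j ≠ i} → Fin 2) ({j : Fin n // j ≠ i} → Fin 2) ℂ :=
  fun a b => ∑ s : Fin 2,
    X (fun j => if h : j = i then s else a ⟨j, h⟩) (fun j => if h : j = i then s else b ⟨j, h⟩)

/-- A transport plan for a (traceless Hermitian) operator `X`: a decomposition
`X = Σ_i X_i` into Hermitian matrices with `tr_i(X_i) = 0`. -/
structure IsTransportPlan {n : ℕ} (X : QMat n) (Xs : Fin n → QMat n) : Prop where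
  herm : ∀ i, (Xs i).IsHermitian
  traceless : ∀ i, (Xs i).trace = 0
  sum_eq : ∑ i, Xs i = X
  ptrace_eq : ∀ i, ptraceSite i (Xs i) = 0

/-- The quantum Wasserstein norm of order 1 of De Palma–Marvian–Trevisan–Lloyd. -/
noncomputable def wnorm {n : ℕ} (X : QMat n) : ℝ :=
  sInf {c : ℝ | ∃ Xs : Fin n → QMat n, IsTransportPlan X Xs ∧ c = ∑ i, traceNorm (Xs i) / 2}

/-- A density matrix: positive semidefinite with unit trace. -/
def IsDensity {n : ℕ} (ρ : QMat n) : Prop := ρ.PosSemidef ∧ ρ.trace = 1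

/-- The Dobrushin influence matrix of a map `Φ = Φ₁ + ⋯ + Φ_n`:
`D_{ij} = max { ‖Φ_i(ρ − ϱ)‖_{W1} : ρ, ϱ density matrices with tr_j(ρ − ϱ) = 0 }`. -/
noncomputable def dobrushin {n : ℕ} (Φs : Fin n → (QMat n → QMat n)) :
    Matrix (Fin n) (Fin n) ℝ :=
  fun i j => sSup {w : ℝ | ∃ ρ ϱ : QMat n, IsDensity ρ ∧ IsDensity ϱ ∧
    ptraceSite j (ρ - ϱ) = 0 ∧ w = wnorm (Φs i (ρ - ϱ))}

/-- The `1 → 1` norm of a real matrix: the maximum column `ℓ₁`-norm. -/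
noncomputable def norm11 {n : ℕ} (D : Matrix (Fin n) (Fin n) ℝ) : ℝ :=
  ⨆ j, ∑ i, |D i j|

/-- `Q` is an update matrix for `Φ` if `Φ` maps any transport plan with cost vector `x`
to a transport plan with cost vector entrywise at most `Q x`. -/
def IsUpdateMatrix {n : ℕ} (Q : Matrix (Fin n) (Fin n) ℝ) (Φ : QMat n → QMat n) : Prop :=
  ∀ (X : QMat n) (Xs : Fin n → QMat n), IsTransportPlan X Xs →
    ∃ Ys : Fin n → QMat n, IsTransportPlan (Φ X) Ys ∧
      ∀ j, traceNorm (Ys j) / 2 ≤ Q.mulVec (fun i => traceNorm (Xs i) / 2) j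

/-! ### Hamiltonian combinatorics -/

/-- `M` is supported on the set of qubits `S` (i.e. `M = M_S ⊗ Id`). -/
def SupportedOn {n : ℕ} (S : Finset (Fin n)) (M : QMat n) : Prop :=
  (∀ a b : QIdx n, (∃ j, j ∉ S ∧ a j ≠ b j) → M a b = 0) ∧
  (∀ a b a' b' : QIdx n, (∀ j ∈ S, a j = a' j) → (∀ j ∈ S, b j = b' j) →
     (∀ j ∉ S, a j = b j) → (∀ j ∉ S, a' j = b' j) → M a b = M a' b')

/-- The support of an operator: the minimal set of qubits on which it acts nontrivially. -/
noncomputable def supp {n : ℕ} (M : QMat n) : Finset (Fin n) :=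
  (Finset.univ.filter fun S : Finset (Fin n) => SupportedOn S M).inf id

/-- The interaction graph of a local Hamiltonian: two distinct sites are adjacent iff
some term's support contains both. -/
def interGraph {n m : ℕ} (Hterm : Fin m → QMat n) : SimpleGraph (Fin n) where
  Adj i j := i ≠ j ∧ ∃ a, i ∈ supp (Hterm a) ∧ j ∈ supp (Hterm a)
  symm := by
    constructor
    rintro i j ⟨hij, a, hi, hj⟩
    exact ⟨hij.symm, a, hj, hi⟩
  loopless := by
    constructor
    rintro i ⟨hii, -⟩
    exact hii rfl

/-- The graph distance on sites induced by the interaction hypergraph. -/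
noncomputable def hamDist {n m : ℕ} (Hterm : Fin m → QMat n) (i j : Fin n) : ℕ :=
  (interGraph Hterm).dist i j

/-- The ball of radius `r` around site `i` in the interaction graph distance. -/
noncomputable def ballH {n m : ℕ} (Hterm : Fin m → QMat n) (i : Fin n) (r : ℕ) :
    Finset (Fin n) :=
  Finset.univ.filter fun j => hamDist Hterm i j ≤ r

/-- Distance from a site to a set of sites. -/
noncomputable def distToSet {n m : ℕ} (Hterm : Fin m → QMat n) (j : Fin n)
    (S : Finset (Fin n)) : ℕ :=
  sInf {r : ℕ | ∃ i ∈ S, hamDist Hterm j i = r}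

/-- Distance between two sets of sites. -/
noncomputable def setDist {n m : ℕ} (Hterm : Fin m → QMat n) (S T : Finset (Fin n)) : ℕ :=
  sInf {r : ℕ | ∃ i ∈ S, ∃ j ∈ T, hamDist Hterm i j = r}

/-- For `S ⊆ [n]`, the real matrix `E_S` with `(E_S)_{uv} = 1` iff `u, v ∈ S`. -/
def ESet {n : ℕ} (S : Finset (Fin n)) : Matrix (Fin n) (Fin n) ℝ :=
  fun u v => if u ∈ S ∧ v ∈ S then 1 else 0

/-- `S_a`: the union of the supports of the terms appearing in the sequence `a`. -/
noncomputable def SOf {n m : ℕ} (Hterm : Fin m → QMat n) {s : ℕ} (a : Fin s → Fin m) :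
    Finset (Fin n) :=
  Finset.univ.biUnion fun ℓ => supp (Hterm (a ℓ))

/-- `a` is a cluster from the set `S₀`: each term's support intersects `S₀` together with
the supports of the previous terms. -/
def IsClusterFrom {n m : ℕ} (Hterm : Fin m → QMat n) (S0 : Finset (Fin n)) {s : ℕ}
    (a : Fin s → Fin m) : Prop :=
  ∀ ℓ : Fin s, ∃ j ∈ supp (Hterm (a ℓ)),
    j ∈ S0 ∨ ∃ p : Fin s, p < ℓ ∧ j ∈ supp (Hterm (a p))

/-- The ball of radius `r` around a set of sites. -/
noncomputable def ballOfSet {n m : ℕ} (Hterm : Fin m → QMat n) (S : Finset (Fin n)) (r : ℕ) :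
    Finset (Fin n) :=
  Finset.univ.filter fun j => distToSet Hterm j S ≤ r

/-! ### Matrix exponentials, Gibbs states, and the balanced Lindbladian -/

/-- The matrix exponential, via its power series. -/
noncomputable def mexp {I : Type} [Fintype I] [DecidableEq I] (A : Matrix I I ℂ) :
    Matrix I I ℂ :=
  ∑' k : ℕ, ((k.factorial : ℂ)⁻¹ • A ^ k)

/-- The Gibbs state `σ = e^{−βH} / tr(e^{−βH})` at inverse temperature `β`. -/
noncomputable def gibbs {I : Type} [Fintype I] [DecidableEq I] (β : ℝ) (H : Matrix I I ℂ) :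
    Matrix I I ℂ :=
  (mexp ((-β : ℂ) • H)).trace⁻¹ • mexp ((-β : ℂ) • H)

/-- The real power `A^r` of a Hermitian matrix, via its spectral decomposition. -/
noncomputable def hermPow {I : Type} [Fintype I] [DecidableEq I] (A : Matrix I I ℂ) (r : ℝ) :
    Matrix I I ℂ :=
  if h : A.IsHermitian then
    (h.eigenvectorUnitary : Matrix I I ℂ) *
      Matrix.diagonal (fun i => ((h.eigenvalues i ^ r : ℝ) : ℂ)) *
      star (h.eigenvectorUnitary : Matrix I I ℂ)
  else 0

/-- The coherent term `G^P` of the balanced Lindbladian, defined in the eigenbasis of `σ`. -/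
noncomputable def coherentG {I : Type} [Fintype I] [DecidableEq I] (σ P : Matrix I I ℂ) :
    Matrix I I ℂ :=
  if h : σ.IsHermitian then
    let U : Matrix I I ℂ := h.eigenvectorUnitary
    let lam : I → ℝ := h.eigenvalues
    let P' : Matrix I I ℂ := star U * P * U
    let w : I → I → ℝ := fun i j =>
      (lam i ^ ((1:ℝ)/2) - lam j ^ ((1:ℝ)/2)) /
        (2 * lam i ^ ((1:ℝ)/4) * lam j ^ ((1:ℝ)/4) *
          (lam i ^ ((1:ℝ)/2) + lam j ^ ((1:ℝ)/2)))
    let G' : Matrix I I ℂ := Matrix.of (fun i j =>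
      (-Complex.I) * ((w i j : ℝ) : ℂ) *
        (∑ t, ((lam t ^ ((1:ℝ)/2) : ℝ) : ℂ) * P' i t * P' t j))
    U * G' * star U
  else 0

/-- The jump operator `A^P = σ^{1/4} P σ^{−1/4}`. -/
noncomputable def jumpA {I : Type} [Fintype I] [DecidableEq I] (σ P : Matrix I I ℂ) :
    Matrix I I ℂ :=
  hermPow σ ((1:ℝ)/4) * P * hermPow σ (-((1:ℝ)/4))

/-- The Lindblad generator `ρ ↦ −i[G,ρ] + AρA† − ½{A†A, ρ}` as a linear endomorphism. -/
noncomputable def lindbladOp {I : Type} [Fintype I] [DecidableEq I] (G A : Matrix I I ℂ) :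
    Module.End ℂ (Matrix I I ℂ) :=
  (-Complex.I) • (LinearMap.mulLeft ℂ G - LinearMap.mulRight ℂ G)
    + (LinearMap.mulRight ℂ (star A)) ∘ₗ (LinearMap.mulLeft ℂ A)
    - ((1:ℂ)/2) • (LinearMap.mulLeft ℂ (star A * A) + LinearMap.mulRight ℂ (star A * A))

/-- The balanced Lindbladian `L^P` for jump `P` with invariant state `σ`. -/
noncomputable def LP {I : Type} [Fintype I] [DecidableEq I] (σ P : Matrix I I ℂ) :
    Module.End ℂ (Matrix I I ℂ) :=
  lindbladOp (coherentG σ P) (jumpA σ P)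

/-- The three nonidentity single-qubit Pauli matrices. -/
noncomputable def pauli1 : Fin 3 → Matrix (Fin 2) (Fin 2) ℂ :=
  ![!![0, 1; 1, 0], !![0, -Complex.I; Complex.I, 0], !![1, 0; 0, -1]]

/-- The Pauli matrix `σ_p` acting at site `j` of an `n`-qubit system. -/
noncomputable def pauliAt {n : ℕ} (j : Fin n) (p : Fin 3) : QMat n :=
  fun a b => (if ∀ l, l ≠ j → a l = b l then 1 else 0) * pauli1 p (a j) (b j)

/-- The site-`j` balanced Lindbladian `L_j* = Σ_{P ∈ P_j} L^P`. -/
noncomputable def siteL {n : ℕ} (σ : QMat n) (j : Fin n) : Module.End ℂ (QMat n) :=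
  ∑ p : Fin 3, LP σ (pauliAt j p)

/-- The balanced Lindbladian `L* = Σ_j L_j*`. -/
noncomputable def fullL {n : ℕ} (σ : QMat n) : Module.End ℂ (QMat n) :=
  ∑ j, siteL σ j

/-- The quantum dynamical semigroup `e^{L}` generated by a Lindbladian, applied to a state. -/
noncomputable def superExp {n : ℕ} (L : Module.End ℂ (QMat n)) (ρ : QMat n) : QMat n :=
  ∑' k : ℕ, ((k.factorial : ℂ)⁻¹ • (L ^ k) ρ)

/-! ### Entropic quantities -/

/-- The von Neumann entropy `S(ρ) = −tr(ρ log ρ)` of a (Hermitian) matrix. -/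
noncomputable def vnEntropy {I : Type} [Fintype I] [DecidableEq I] (ρ : Matrix I I ℂ) : ℝ :=
  if h : ρ.IsHermitian then -∑ i, h.eigenvalues i * Real.log (h.eigenvalues i) else 0

/-- The reduced operator on the subsystem `S`: the partial trace over the complement of `S`. -/
noncomputable def reduceTo {n : ℕ} (S : Finset (Fin n)) (X : QMat n) :
    Matrix ({j : Fin n // j ∈ S} → Fin 2) ({j : Fin n // j ∈ S} → Fin 2) ℂ :=
  fun a b => ∑ c : {j : Fin n // j ∉ S} → Fin 2,
    X (fun j => if h : j ∈ S then a ⟨j, h⟩ else c ⟨j, h⟩)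
      (fun j => if h : j ∈ S then b ⟨j, h⟩ else c ⟨j, h⟩)

private lemma stat_quarter_pows (a : ℝ) (ha : 0 < a) :
    a ^ (1:ℝ) = (a ^ ((1:ℝ)/4))^4 ∧ a ^ ((1:ℝ)/2) = (a ^ ((1:ℝ)/4))^2 ∧
    a ^ ((3:ℝ)/4) = (a ^ ((1:ℝ)/4))^3 ∧ a ^ (-((1:ℝ)/4)) = (a ^ ((1:ℝ)/4))⁻¹ := by
  have h : ∀ k : ℕ, (a ^ ((1:ℝ)/4))^k = a ^ ((1:ℝ)/4 * k) := by
    intro k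
    rw [← Real.rpow_natCast (a ^ ((1:ℝ)/4)) k, ← Real.rpow_mul ha.le]
  refine ⟨?_, ?_, ?_, ?_⟩
  · rw [h]; norm_num
  · rw [h]; norm_num
  · rw [h]; norm_num
  · exact Real.rpow_neg ha.le _

private theorem stat_key {I : Type} [Fintype I] [DecidableEq I] (σ : Matrix I I ℂ) (hσ : σ.PosDef)
    (P : Matrix I I ℂ) (hP : P.IsHermitian) : (LP σ P) σ = 0 := by
  have h : σ.IsHermitian := hσ.1
  set V : Matrix I I ℂ := (h.eigenvectorUnitary : Matrix I I ℂ) with hV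
  have hVsV : star V * V = 1 := Matrix.mem_unitaryGroup_iff'.mp h.eigenvectorUnitary.2
  have hVVs : V * star V = 1 := Matrix.mem_unitaryGroup_iff.mp h.eigenvectorUnitary.2
  set lam : I → ℝ := h.eigenvalues with hlam
  have hpos : ∀ i, 0 < lam i := fun i => hσ.eigenvalues_pos i
  set D : ℝ → Matrix I I ℂ := fun r => Matrix.diagonal (fun i => ((lam i ^ r : ℝ) : ℂ)) with hD
  have hDmul : ∀ r s : ℝ, D r * D s = D (r + s) := by
    intro r s
    rw [hD]
    rw [Matrix.diagonal_mul_diagonal]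
    ext i j
    by_cases hij : i = j
    · subst hij
      simp [Matrix.diagonal_apply_eq, ← Complex.ofReal_mul, ← Real.rpow_add (hpos i)]
    · simp [Matrix.diagonal_apply_ne _ hij]
  have hDstar : ∀ r : ℝ, star (D r) = D r := by
    intro r
    rw [hD]
    simp [Matrix.star_eq_conjTranspose, Matrix.diagonal_conjTranspose, Complex.conj_ofReal]
  have hσD : σ = V * D 1 * star V := by
    have hd : Matrix.diagonal (RCLike.ofReal ∘ h.eigenvalues) = D 1 := by
      rw [hD]
      ext i j
      by_cases hij : i = j
      · subst hij
        simp [Matrix.diagonal_apply_eq, Real.rpow_one]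
        rfl
      · simp [Matrix.diagonal_apply_ne _ hij]
    conv_lhs => rw [h.spectral_theorem]
    rw [hd]
    rfl
  have hPow : ∀ r : ℝ, hermPow σ r = V * D r * star V := by
    intro r; rw [hermPow, dif_pos h]
  set P' : Matrix I I ℂ := star V * P * V with hP'def
  have hP' : star P' = P' := by
    rw [hP'def]
    simp only [star_mul, star_star, Matrix.star_eq_conjTranspose, hP.eq]
    simp [mul_assoc]
  have hConj : ∀ X Y : Matrix I I ℂ, (V * X * star V) * (V * Y * star V) = V * (X * Y) * star V := by
    intro X Y
    simp only [mul_assoc]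
    rw [← mul_assoc (star V) V, hVsV, one_mul]
  have hPmid : P = V * P' * star V := by
    rw [hP'def, ← mul_assoc, ← mul_assoc, hVVs, one_mul, mul_assoc, hVVs, mul_one]
  have hA : jumpA σ P = V * (D ((1:ℝ)/4) * P' * D (-((1:ℝ)/4))) * star V := by
    rw [jumpA, hPow, hPow]
    conv_lhs => rw [hPmid]
    rw [hConj, hConj]
  have hAstar : star (jumpA σ P) = V * (D (-((1:ℝ)/4)) * P' * D ((1:ℝ)/4)) * star V := by
    rw [hA]
    simp only [star_mul, star_star, hDstar, hP']
    simp [mul_assoc]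
  set w : I → I → ℝ := fun i j =>
      (lam i ^ ((1:ℝ)/2) - lam j ^ ((1:ℝ)/2)) /
        (2 * lam i ^ ((1:ℝ)/4) * lam j ^ ((1:ℝ)/4) *
          (lam i ^ ((1:ℝ)/2) + lam j ^ ((1:ℝ)/2))) with hw
  set G' : Matrix I I ℂ := Matrix.of (fun i j =>
      (-Complex.I) * ((w i j : ℝ) : ℂ) *
        (∑ t, ((lam t ^ ((1:ℝ)/2) : ℝ) : ℂ) * P' i t * P' t j)) with hG'
  have hG : coherentG σ P = V * G' * star V := by
    rw [coherentG, dif_pos h]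
  have hConjSmul : ∀ (c : ℂ) (X : Matrix I I ℂ),
      c • (V * X * star V) = V * (c • X) * star V := by
    intro c X
    rw [mul_smul_comm, smul_mul_assoc]
  have hConjAdd : ∀ X Y : Matrix I I ℂ,
      V * X * star V + V * Y * star V = V * (X + Y) * star V := by
    intro X Y
    rw [mul_add, add_mul]
  have hConjSub : ∀ X Y : Matrix I I ℂ,
      V * X * star V - V * Y * star V = V * (X - Y) * star V := by
    intro X Y
    rw [mul_sub, sub_mul]
  have hzero : ∀ X : Matrix I I ℂ, X = 0 → V * X * star V = 0 := by
    rintro X rfl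
    simp
  simp only [LP, lindbladOp, LinearMap.add_apply, LinearMap.sub_apply, LinearMap.smul_apply,
    LinearMap.comp_apply, LinearMap.mulLeft_apply, LinearMap.mulRight_apply]
  rw [hG, hAstar, hA]
  rw [hσD]
  simp only [hConj, hConjSmul, hConjSub, hConjAdd]
  apply hzero
  have hmerge : ∀ (r s : ℝ) (X : Matrix I I ℂ), D r * (D s * X) = D (r + s) * X := by
    intro r s X
    rw [← mul_assoc, hDmul]
  simp only [mul_assoc]
  simp only [hmerge]
  norm_num
  simp only [hDmul]
  norm_num
  ext i j
  simp only [hD, hG', Matrix.sub_apply, Matrix.add_apply, Matrix.smul_apply, Matrix.neg_apply,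
    Matrix.zero_apply, smul_eq_mul, Matrix.diagonal_mul, Matrix.mul_diagonal, Matrix.mul_apply,
    Matrix.of_apply]
  simp only [Matrix.diagonal_apply, ite_mul, mul_ite, zero_mul, mul_zero,
    Finset.sum_ite_eq, Finset.sum_ite_eq', Finset.mem_univ, if_true]
  have hsum : ∀ c : ℂ, (∑ x, P' i x * ((((lam x ^ ((1:ℝ)/2) : ℝ)) : ℂ) * (P' x j * c)))
      = (∑ t, (((lam t ^ ((1:ℝ)/2) : ℝ)) : ℂ) * P' i t * P' t j) * c := by
    intro c
    rw [Finset.sum_mul]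
    exact Finset.sum_congr rfl fun x _ => by ring
  rw [hsum, hsum, hsum]
  set S : ℂ := ∑ t, (((lam t ^ ((1:ℝ)/2) : ℝ)) : ℂ) * P' i t * P' t j with hS
  have hEr : w i j * (lam i ^ (1:ℝ) - lam j ^ (1:ℝ)) + lam i ^ ((1:ℝ)/4) * lam j ^ ((1:ℝ)/4)
      - (1/2 * (lam i ^ (-((1:ℝ)/4)) * lam j ^ ((3:ℝ)/4))
        + 1/2 * (lam i ^ ((3:ℝ)/4) * lam j ^ (-((1:ℝ)/4)))) = 0 := by
    simp only [hw]
    obtain ⟨e4a, e2a, e3a, ema⟩ := stat_quarter_pows (lam i) (hpos i)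
    obtain ⟨e4b, e2b, e3b, emb⟩ := stat_quarter_pows (lam j) (hpos j)
    rw [e4a, e2a, e3a, ema, e4b, e2b, e3b, emb]
    set x := lam i ^ ((1:ℝ)/4) with hx'
    set y := lam j ^ ((1:ℝ)/4) with hy'
    have hx : 0 < x := Real.rpow_pos_of_pos (hpos i) _
    have hy : 0 < y := Real.rpow_pos_of_pos (hpos j) _
    have hxy : x^2 + y^2 ≠ 0 := by positivity
    field_simp
    ring
  have hE : ((w i j : ℝ) : ℂ) * ((((lam i ^ (1:ℝ) : ℝ)) : ℂ) - (((lam j ^ (1:ℝ) : ℝ)) : ℂ))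
      + (((lam i ^ ((1:ℝ)/4) : ℝ)) : ℂ) * (((lam j ^ ((1:ℝ)/4) : ℝ)) : ℂ)
      - (1/2 * ((((lam i ^ (-((1:ℝ)/4)) : ℝ)) : ℂ) * (((lam j ^ ((3:ℝ)/4) : ℝ)) : ℂ))
        + 1/2 * ((((lam i ^ ((3:ℝ)/4) : ℝ)) : ℂ) * (((lam j ^ (-((1:ℝ)/4)) : ℝ)) : ℂ))) = 0 := by
    have h0 := congrArg (Complex.ofReal) hEr
    push_cast at h0
    linear_combination h0
  linear_combination S * hE + (((w i j : ℝ) : ℂ) * S *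
    ((((lam j ^ (1:ℝ) : ℝ)) : ℂ) - (((lam i ^ (1:ℝ) : ℝ)) : ℂ))) * Complex.I_mul_I


private lemma pauli1_isHermitian (p : Fin 3) : (pauli1 p).IsHermitian := by
  fin_cases p <;>
  · show Matrix.conjTranspose _ = _
    ext i j
    fin_cases i <;> fin_cases j <;>
      simp [pauli1, Matrix.conjTranspose_apply, Complex.conj_I]

private lemma pauliAt_isHermitian {n : ℕ} (j : Fin n) (p : Fin 3) :
    (pauliAt j p).IsHermitian := by
  have hp := pauli1_isHermitian p
  show Matrix.conjTranspose _ = _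
  ext a b
  rw [Matrix.conjTranspose_apply]
  by_cases hab : ∀ l, l ≠ j → a l = b l
  · have hba : ∀ l, l ≠ j → b l = a l := fun l hl => (hab l hl).symm
    have hstar : (starRingEnd ℂ) (pauli1 p (b j) (a j)) = pauli1 p (a j) (b j) := by
      conv_rhs => rw [← hp]
      simp [Matrix.conjTranspose_apply, Complex.star_def]
    simp only [pauliAt]
    rw [if_pos (fun l hl => hba l hl), if_pos (fun l hl => hab l hl), one_mul, one_mul]
    exact hstar
  · have hba : ¬ ∀ l, l ≠ j → b l = a l := fun hba => hab fun l hl => (hba l hl).symm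
    simp [pauliAt, hab, hba]

/-- **Stationarity of the Gibbs state**: for any invertible density matrix `σ` and Hermitian
`P`, the balanced Lindbladian `L^P` annihilates `σ`; consequently so does `L* = Σ_j Σ_P L^P`. -/
theorem stationarity_of_gibbs_state
    (n : ℕ) (σ : QMat n) (hσpos : σ.PosDef) (hσtr : σ.trace = 1) :
    (∀ P : QMat n, P.IsHermitian → (LP σ P) σ = 0) ∧ (fullL σ) σ = 0 := by
  constructor
  · intro P hP
    exact stat_key σ hσpos P hP
  · simp only [fullL, siteL, LinearMap.sum_apply]
    refine Finset.sum_eq_zero fun j _ => Finset.sum_eq_zero fun p _ =>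
      stat_key σ hσpos _ (pauliAt_isHermitian j p)

end
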